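/- The map irc preserves the crossing statistic C_EE: for any permutation π of [n], C_EE(irc(π)) = C_EE(π). -/
import Mathlib


/-- The inverse-reverse-complement map: `irc π i = j ↔ π (rev j) = rev i`. -/
def irc {n : ℕ} (π : Equiv.Perm (Fin n)) : Equiv.Perm (Fin n) :=
  Fin.revPerm * π⁻¹ * Fin.revPerm

def AEE {n : ℕ} (π : Equiv.Perm (Fin n)) : ℕ :=
  (Finset.univ.filter fun p : Fin n × Fin n =>
    p.2 < p.1 ∧ p.1 ≤ π p.1 ∧ π p.1 < π p.2).card

def ANN {n : ℕ} (π : Equiv.Perm (Fin n)) : ℕ :=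
  (Finset.univ.filter fun p : Fin n × Fin n =>
    π p.2 < π p.1 ∧ π p.1 < p.1 ∧ p.1 < p.2).card

def AEN {n : ℕ} (π : Equiv.Perm (Fin n)) : ℕ :=
  (Finset.univ.filter fun p : Fin n × Fin n =>
    p.2 ≤ π p.2 ∧ π p.2 < π p.1 ∧ π p.1 < p.1).card

def ANE {n : ℕ} (π : Equiv.Perm (Fin n)) : ℕ :=
  (Finset.univ.filter fun p : Fin n × Fin n =>
    π p.1 < p.1 ∧ p.1 < p.2 ∧ p.2 ≤ π p.2).card

def CEE {n : ℕ} (π : Equiv.Perm (Fin n)) : ℕ :=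
  (Finset.univ.filter fun p : Fin n × Fin n =>
    p.2 < p.1 ∧ p.1 ≤ π p.2 ∧ π p.2 < π p.1).card

def CNN {n : ℕ} (π : Equiv.Perm (Fin n)) : ℕ :=
  (Finset.univ.filter fun p : Fin n × Fin n =>
    π p.1 < π p.2 ∧ π p.2 < p.1 ∧ p.1 < p.2).card

theorem irc_preserves_CEE (n : ℕ) (π : Equiv.Perm (Fin n)) :
    CEE (irc π) = CEE π := by
  unfold CEE irc
  apply Finset.card_bij' (fun p _ => (π⁻¹ (Fin.rev p.2), π⁻¹ (Fin.rev p.1)))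
    (fun p _ => (Fin.rev (π p.2), Fin.rev (π p.1)))
  · intro p hp
    simp only [Finset.mem_filter, Finset.mem_univ, true_and,
      Equiv.Perm.mul_apply, Fin.revPerm_apply] at hp ⊢
    obtain ⟨h1, h2, h3⟩ := hp
    refine ⟨Fin.rev_lt_rev.mp h3, ?_, ?_⟩
    · simpa [Fin.rev_rev] using Fin.rev_le_rev.mpr h2
    · simpa [Fin.rev_rev] using Fin.rev_lt_rev.mpr h1
  · intro p hp
    simp only [Finset.mem_filter, Finset.mem_univ, true_and,
      Equiv.Perm.mul_apply, Fin.revPerm_apply] at hp ⊢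
    obtain ⟨h1, h2, h3⟩ := hp
    refine ⟨?_, ?_, ?_⟩ <;>
      simp [Fin.rev_rev, Fin.rev_lt_rev, Fin.rev_le_rev, h1, h2, h3]
  · intro p hp
    simp [Fin.rev_rev]
  · intro p hp
    simp [Fin.rev_rev]
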